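/- Let {e_1, …, e_n} be a finite set of commuting projections in a C*-algebra, and set e'_i := e_i − ⋁_{e_j < e_i} e_j. Suppose {e'_1, …, e'_n} is a family of nonzero pairwise orthogonal projections linearly spanning the C*-algebra D generated by the e_i. Then for any indices a, i one has e'_a ≤ e_i if and only if e_a ≤ e_i. -/

import Mathlib

open scoped Classical

/-- `p ≤ q` for projections: `p * q = p`. -/
def pLe {A : Type*} [Mul A] (p q : A) : Prop := p * q = p

/-- `p < q` for projections: `p * q = p` and `p ≠ q`. -/
def pLt {A : Type*} [Mul A] (p q : A) : Prop := p * q = p ∧ p ≠ q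

/-- The join `⋁_{j ∈ S} e j` of a finite family of commuting projections,
computed as `1 - ∏_{j ∈ S} (1 - e j)`. -/
noncomputable def pJoin {A : Type*} [Ring A] {n : ℕ} (e : Fin n → A) (S : Finset (Fin n)) : A :=
  1 - ((S.sort (· ≤ ·)).map fun j => (1 - e j)).prod

/-- `e'_i := e_i - ⋁_{e_j < e_i} e_j`. -/
noncomputable def eprime {A : Type*} [Ring A] {n : ℕ} (e : Fin n → A) (i : Fin n) : A :=
  e i - pJoin e (Finset.univ.filter fun j => pLt (e j) (e i))

section Aux

variable {A : Type*} [Ring A] {n : ℕ}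

/-- Product of `1 - e j` over a list of indices. -/
noncomputable def prodL (e : Fin n → A) (L : List (Fin n)) : A :=
  (L.map fun j => 1 - e j).prod

variable (e : Fin n → A)

lemma commute_prodL (hcomm : ∀ i j, e i * e j = e j * e i) (i : Fin n) (L : List (Fin n)) :
    Commute (e i) (prodL e L) := by
  apply Commute.list_prod_right
  intro x hx
  simp only [List.mem_map] at hx
  obtain ⟨j, -, rfl⟩ := hx
  exact (Commute.one_right _).sub_right (hcomm i j)

lemma commute_eprime (hcomm : ∀ i j, e i * e j = e j * e i) (i k : Fin n) :
    Commute (e i) (eprime e k) := by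
  unfold eprime pJoin
  exact (show Commute (e i) (e k) from hcomm i k).sub_right
    ((Commute.one_right _).sub_right (commute_prodL e hcomm i _))

lemma one_sub_mul_prodL (hcomm : ∀ i j, e i * e j = e j * e i) (a : Fin n) (L : List (Fin n))
    (h : ∀ j ∈ L, e j * e a = e j) :
    (1 - e a) * prodL e L = 1 - e a := by
  induction L with
  | nil => simp [prodL]
  | cons j t ih =>
    have hj : e j * e a = e j := h j List.mem_cons_self
    have haj : e a * e j = e j := by rw [hcomm a j]; exact hj
    have key : (1 - e a) * (1 - e j) = 1 - e a := by
      have h2 : (1 - e a) * (1 - e j) = 1 - e j - e a + e a * e j := by noncomm_ring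
      rw [h2, haj]; abel
    have hc : prodL e (j :: t) = (1 - e j) * prodL e t := by simp [prodL]
    rw [hc, ← mul_assoc, key, ih (fun x hx => h x (List.mem_cons_of_mem _ hx))]

lemma eprime_eq (hcomm : ∀ i j, e i * e j = e j * e i) (a : Fin n) :
    eprime e a =
      e a * prodL e ((Finset.univ.filter fun j => pLt (e j) (e a)).sort (· ≤ ·)) := by
  set L := (Finset.univ.filter fun j => pLt (e j) (e a)).sort (· ≤ ·) with hL
  have hmem : ∀ j ∈ L, e j * e a = e j := by
    intro j hj
    rw [hL, Finset.mem_sort] at hj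
    simp only [Finset.mem_filter, Finset.mem_univ, true_and] at hj
    exact hj.1
  have h1 : (1 - e a) * prodL e L = 1 - e a := one_sub_mul_prodL e hcomm a L hmem
  have h2 : e a * prodL e L = prodL e L - (1 - e a) * prodL e L := by noncomm_ring
  rw [h1] at h2
  show e a - (1 - prodL e L) = e a * prodL e L
  rw [h2]; abel

lemma prodL_idem (hproj1 : ∀ i, e i * e i = e i) (hcomm : ∀ i j, e i * e j = e j * e i)
    (L : List (Fin n)) : prodL e L * prodL e L = prodL e L := by
  induction L with
  | nil => simp [prodL]
  | cons j t ih =>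
    have hco : Commute (prodL e t) (1 - e j) :=
      ((Commute.one_left _).sub_left (commute_prodL e hcomm j t)).symm
    have hid : (1 - e j) * (1 - e j) = 1 - e j := by
      have h2 : (1 - e j) * (1 - e j) = 1 - e j - e j + e j * e j := by noncomm_ring
      rw [h2, hproj1 j]; abel
    have hc : prodL e (j :: t) = (1 - e j) * prodL e t := by simp [prodL]
    rw [hc, hco.mul_mul_mul_comm, hid, ih]

lemma eprime_idem (hproj1 : ∀ i, e i * e i = e i) (hcomm : ∀ i j, e i * e j = e j * e i)
    (a : Fin n) : eprime e a * eprime e a = eprime e a := by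
  rw [eprime_eq e hcomm a]
  set p := prodL e ((Finset.univ.filter fun j => pLt (e j) (e a)).sort (· ≤ ·)) with hp
  have hc : Commute p (e a) := (commute_prodL e hcomm a _).symm
  rw [hc.mul_mul_mul_comm, hproj1 a, hp, prodL_idem e hproj1 hcomm]

lemma e_mul_eprime_self (hproj1 : ∀ i, e i * e i = e i)
    (hcomm : ∀ i j, e i * e j = e j * e i) (a : Fin n) :
    e a * eprime e a = eprime e a := by
  rw [eprime_eq e hcomm a, ← mul_assoc, hproj1 a]

end Aux

section Main

set_option linter.unusedSectionVars false

variable {A : Type*} [NormedRing A] [StarRing A] [CStarRing A]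
    [NormedAlgebra ℂ A] [StarModule ℂ A] [CompleteSpace A]
    {n : ℕ} (e : Fin n → A)

lemma e_mem_adjoin (j : Fin n) : e j ∈ Algebra.adjoin ℂ (Set.range e) :=
  Algebra.subset_adjoin ⟨j, rfl⟩

lemma eprime_mem_adjoin (k : Fin n) : eprime e k ∈ Algebra.adjoin ℂ (Set.range e) := by
  unfold eprime pJoin
  refine sub_mem (e_mem_adjoin e k) (sub_mem (one_mem _) (list_prod_mem ?_))
  intro x hx
  simp only [List.mem_map] at hx
  obtain ⟨j, -, rfl⟩ := hx
  exact sub_mem (one_mem _) (e_mem_adjoin e j)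

lemma mem_span_rep
    (hspan : Subalgebra.toSubmodule (Algebra.adjoin ℂ (Set.range e)) ≤
      Submodule.span ℂ (Set.range (eprime e)))
    (x : A) (hx : x ∈ Algebra.adjoin ℂ (Set.range e)) :
    ∃ c : Fin n → ℂ, ∑ m, c m • eprime e m = x := by
  have hx' : x ∈ Submodule.span ℂ (Set.range (eprime e)) := hspan hx
  rwa [Submodule.mem_span_range_iff_exists_fun] at hx'

lemma smul_cancel {c : ℂ} {x : A} (h : c • x = 0) (hx : x ≠ 0) : c = 0 := by
  by_contra hc
  apply hx
  have h2 := congrArg (fun y => c⁻¹ • y) h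
  simpa [smul_smul, inv_mul_cancel₀ hc] using h2

lemma sum_mul_eprime (hproj1 : ∀ i, e i * e i = e i)
    (hcomm : ∀ i j, e i * e j = e j * e i)
    (horth : ∀ i j, i ≠ j → eprime e i * eprime e j = 0)
    (c : Fin n → ℂ) (m : Fin n) :
    (∑ l, c l • eprime e l) * eprime e m = c m • eprime e m := by
  rw [Finset.sum_mul]
  rw [Finset.sum_eq_single m]
  · rw [smul_mul_assoc, eprime_idem e hproj1 hcomm m]
  · intro l _ hlm; rw [smul_mul_assoc, horth l m hlm, smul_zero]
  · intro h; exact absurd (Finset.mem_univ m) h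

lemma dichotomy (hproj1 : ∀ i, e i * e i = e i)
    (hcomm : ∀ i j, e i * e j = e j * e i)
    (hne : ∀ i, eprime e i ≠ 0)
    (horth : ∀ i j, i ≠ j → eprime e i * eprime e j = 0)
    (hspan : Subalgebra.toSubmodule (Algebra.adjoin ℂ (Set.range e)) ≤
      Submodule.span ℂ (Set.range (eprime e)))
    (i k : Fin n) :
    e i * eprime e k = 0 ∨ e i * eprime e k = eprime e k := by
  obtain ⟨c, hc⟩ := mem_span_rep e hspan (e i * eprime e k)
    (mul_mem (e_mem_adjoin e i) (eprime_mem_adjoin e k))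
  have hcm : ∀ m, m ≠ k → c m = 0 := by
    intro m hmk
    have h1 : (e i * eprime e k) * eprime e m = 0 := by
      rw [mul_assoc, horth k m (fun h => hmk h.symm), mul_zero]
    rw [← hc, sum_mul_eprime e hproj1 hcomm horth] at h1
    exact smul_cancel h1 (hne m)
  have hx : e i * eprime e k = c k • eprime e k := by
    rw [← hc]
    exact Finset.sum_eq_single k (fun l _ hl => by rw [hcm l hl, zero_smul]) (by simp)
  have hsq : (e i * eprime e k) * (e i * eprime e k) = e i * eprime e k := by
    have hco : Commute (eprime e k) (e i) := (commute_eprime e hcomm i k).symm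
    rw [hco.mul_mul_mul_comm, hproj1 i, eprime_idem e hproj1 hcomm k]
  rw [hx, smul_mul_assoc, mul_smul_comm, smul_smul,
    eprime_idem e hproj1 hcomm k] at hsq
  have hz : (c k * c k - c k) • eprime e k = 0 := by rw [sub_smul, hsq, sub_self]
  have h0 : c k * c k - c k = 0 := smul_cancel hz (hne k)
  have h0' : c k * (c k - 1) = 0 := by rw [mul_sub, mul_one]; exact h0
  rcases mul_eq_zero.mp h0' with h | h
  · left; rw [hx, h, zero_smul]
  · right; rw [hx, sub_eq_zero.mp h, one_smul]

lemma one_eq_sum (hproj1 : ∀ i, e i * e i = e i)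
    (hcomm : ∀ i j, e i * e j = e j * e i)
    (hne : ∀ i, eprime e i ≠ 0)
    (horth : ∀ i j, i ≠ j → eprime e i * eprime e j = 0)
    (hspan : Subalgebra.toSubmodule (Algebra.adjoin ℂ (Set.range e)) ≤
      Submodule.span ℂ (Set.range (eprime e))) :
    (1 : A) = ∑ k, eprime e k := by
  obtain ⟨c, hc⟩ := mem_span_rep e hspan 1 (one_mem _)
  have hcm : ∀ m, c m = 1 := by
    intro m
    have h1 : (∑ l, c l • eprime e l) * eprime e m = eprime e m := by rw [hc, one_mul]
    rw [sum_mul_eprime e hproj1 hcomm horth] at h1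
    have hz : (c m - 1) • eprime e m = 0 := by rw [sub_smul, h1, one_smul, sub_self]
    exact sub_eq_zero.mp (smul_cancel hz (hne m))
  rw [← hc]
  refine (Finset.sum_congr rfl fun k _ => ?_).symm
  rw [hcm k, one_smul]

/-- `Sset a` : the set of indices `k` with `e'_k ≤ e_a`. -/
noncomputable def Sset (a : Fin n) : Finset (Fin n) :=
  Finset.univ.filter fun k => e a * eprime e k = eprime e k

lemma e_eq_sum (hproj1 : ∀ i, e i * e i = e i)
    (hcomm : ∀ i j, e i * e j = e j * e i)
    (hne : ∀ i, eprime e i ≠ 0)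
    (horth : ∀ i j, i ≠ j → eprime e i * eprime e j = 0)
    (hspan : Subalgebra.toSubmodule (Algebra.adjoin ℂ (Set.range e)) ≤
      Submodule.span ℂ (Set.range (eprime e)))
    (a : Fin n) :
    e a = ∑ k ∈ Sset e a, eprime e k := by
  have h1 : e a = ∑ k, e a * eprime e k := by
    calc e a = e a * 1 := (mul_one _).symm
    _ = e a * ∑ k, eprime e k := by rw [← one_eq_sum e hproj1 hcomm hne horth hspan]
    _ = ∑ k, e a * eprime e k := by rw [Finset.mul_sum]
  conv_lhs => rw [h1]
  simp only [Sset]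
  rw [Finset.sum_filter]
  refine Finset.sum_congr rfl fun k _ => ?_
  split_ifs with h
  · exact h
  · exact (dichotomy e hproj1 hcomm hne horth hspan a k).resolve_right h

lemma Sset_mono (hcomm : ∀ i j, e i * e j = e j * e i) (j a : Fin n)
    (hja : e j * e a = e j) : Sset e j ⊆ Sset e a := by
  intro k hk
  simp only [Sset, Finset.mem_filter, Finset.mem_univ, true_and] at hk ⊢
  have haj : e a * e j = e j := by rw [hcomm a j]; exact hja
  calc e a * eprime e k = e a * (e j * eprime e k) := by rw [hk]
  _ = (e a * e j) * eprime e k := by rw [mul_assoc]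
  _ = eprime e k := by rw [haj, hk]

lemma kill (hcomm : ∀ i j, e i * e j = e j * e i) (k : Fin n) (L : List (Fin n))
    (h : ∀ j ∈ L, e j * eprime e k = 0) :
    eprime e k * prodL e L = eprime e k := by
  induction L with
  | nil => simp [prodL]
  | cons j t ih =>
    have hc : prodL e (j :: t) = (1 - e j) * prodL e t := by simp [prodL]
    have h2 : eprime e k * e j = 0 := by
      rw [← (commute_eprime e hcomm j k).eq]
      exact h j List.mem_cons_self
    have h1 : eprime e k * (1 - e j) = eprime e k := by
      rw [mul_sub, mul_one, h2, sub_zero]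
    rw [hc, ← mul_assoc, h1, ih (fun x hx => h x (List.mem_cons_of_mem _ hx))]

lemma key_lemma (hproj1 : ∀ i, e i * e i = e i)
    (hcomm : ∀ i j, e i * e j = e j * e i)
    (hne : ∀ i, eprime e i ≠ 0)
    (horth : ∀ i j, i ≠ j → eprime e i * eprime e j = 0)
    (hspan : Subalgebra.toSubmodule (Algebra.adjoin ℂ (Set.range e)) ≤
      Submodule.span ℂ (Set.range (eprime e))) :
    ∀ m (a k : Fin n), (Sset e a).card ≤ m → k ∈ Sset e a → Sset e k ⊆ Sset e a := by
  intro m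
  induction m with
  | zero =>
    intro a k hcard hk
    have : 0 < (Sset e a).card := Finset.card_pos.mpr ⟨k, hk⟩
    omega
  | succ m ih =>
    intro a k hcard hk
    by_cases hka : k = a
    · subst hka; exact subset_rfl
    have hk' : e a * eprime e k = eprime e k := by
      simpa [Sset] using hk
    have hk_ea : eprime e k * e a = eprime e k := by
      rw [← (commute_eprime e hcomm a k).eq]; exact hk'
    set L := (Finset.univ.filter fun j => pLt (e j) (e a)).sort (· ≤ ·) with hLdef
    have hkp : eprime e k * prodL e L = 0 := by
      have h0 : eprime e k * (e a * prodL e L) = 0 := by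
        rw [← eprime_eq e hcomm a]; exact horth k a hka
      rwa [← mul_assoc, hk_ea] at h0
    have hex : ∃ j ∈ L, e j * eprime e k ≠ 0 := by
      by_contra hcon
      push_neg at hcon
      have hkill := kill e hcomm k L hcon
      exact hne k (by rw [← hkill, hkp])
    obtain ⟨j, hjL, hjne⟩ := hex
    have hjk : e j * eprime e k = eprime e k :=
      (dichotomy e hproj1 hcomm hne horth hspan j k).resolve_left hjne
    have hjlt : pLt (e j) (e a) := by
      rw [hLdef, Finset.mem_sort] at hjL
      simpa using hjL
    have hsub : Sset e j ⊆ Sset e a := Sset_mono e hcomm j a hjlt.1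
    have hnee : Sset e j ≠ Sset e a := by
      intro hEq
      apply hjlt.2
      rw [e_eq_sum e hproj1 hcomm hne horth hspan j,
        e_eq_sum e hproj1 hcomm hne horth hspan a, hEq]
    have hlt : (Sset e j).card < (Sset e a).card :=
      Finset.card_lt_card (HasSubset.Subset.ssubset_of_ne hsub hnee)
    have hkj : k ∈ Sset e j := by
      simp [Sset, hjk]
    exact (ih j k (by omega) hkj).trans hsub

end Main

/-- If the `e'_i` are nonzero, pairwise orthogonal and linearly span the C*-algebra `D`
generated by the commuting projections `e_i`, then `e'_a ≤ e_i ↔ e_a ≤ e_i`. -/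
theorem stmt2 {A : Type*} [NormedRing A] [StarRing A] [CStarRing A]
    [NormedAlgebra ℂ A] [StarModule ℂ A] [CompleteSpace A]
    {n : ℕ} (e : Fin n → A)
    (hproj : ∀ i, e i * e i = e i ∧ star (e i) = e i)
    (hcomm : ∀ i j, e i * e j = e j * e i)
    (hne : ∀ i, eprime e i ≠ 0)
    (horth : ∀ i j, i ≠ j → eprime e i * eprime e j = 0)
    (hspan : Subalgebra.toSubmodule (Algebra.adjoin ℂ (Set.range e)) ≤
      Submodule.span ℂ (Set.range (eprime e))) :
    ∀ a i, pLe (eprime e a) (e i) ↔ pLe (e a) (e i) := by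
  have hproj1 : ∀ i, e i * e i = e i := fun i => (hproj i).1
  intro a i
  constructor
  · intro h
    have h' : eprime e a * e i = eprime e a := h
    have hai : a ∈ Sset e i := by
      simp only [Sset, Finset.mem_filter, Finset.mem_univ, true_and]
      rw [(commute_eprime e hcomm i a).eq]
      exact h'
    have hsub : Sset e a ⊆ Sset e i :=
      key_lemma e hproj1 hcomm hne horth hspan (Sset e i).card i a le_rfl hai
    show e a * e i = e a
    conv_lhs => rw [e_eq_sum e hproj1 hcomm hne horth hspan a]
    conv_rhs => rw [e_eq_sum e hproj1 hcomm hne horth hspan a]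
    rw [Finset.sum_mul]
    refine Finset.sum_congr rfl fun k hk => ?_
    have hki : e i * eprime e k = eprime e k := by
      have := hsub hk
      simpa [Sset] using this
    rw [(commute_eprime e hcomm i k).eq] at hki
    exact hki
  · intro h
    have h' : e a * e i = e a := h
    show eprime e a * e i = eprime e a
    rw [eprime_eq e hcomm a, mul_assoc,
      ← ((commute_prodL e hcomm i _)).eq, ← mul_assoc, h']
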